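/- Let U ⊆ W and {X_u | u ∈ U} satisfy conditions I1–I4 (e ∈ X_u; ℓ(xu) = ℓ(x)+ℓ(u) for x ∈ X_u; the sets X_u u are pairwise disjoint; and M = ⟨T_x C_u | u ∈ U, x ∈ X_u⟩_A is a left ideal of H). Then the set B = {T_x C_u | u ∈ U, x ∈ X_u} is an A-basis of M. -/

import Mathlib

open LaurentPolynomial

noncomputable section

/-- The ground ring `𝒜 = ℂ[v,v⁻¹]`. -/
abbrev 𝒜 : Type := LaurentPolynomial ℂ

/-- The subset `v⁻¹ℤ[v⁻¹]` of `𝒜 = ℂ[v,v⁻¹]`: Laurent polynomials with integer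
coefficients supported in strictly negative degrees. -/
def Alt0 (f : 𝒜) : Prop :=
  ∀ n : ℤ, f.coeff n ≠ 0 → n < 0 ∧ ∃ m : ℤ, f.coeff n = (m : ℂ)

variable {B₀ : Type*} {W : Type*} [Group W] {M : CoxeterMatrix B₀}
variable {H : Type*}

/-- `L` is a positive weight function on the Coxeter system `cs`. -/
def IsWeight (cs : CoxeterSystem M W) (L : W → ℕ) : Prop :=
  (∀ w w' : W, cs.length (w * w') = cs.length w + cs.length w' →
      L (w * w') = L w + L w') ∧
  (∀ i : B₀, 0 < L (cs.simple i))

variable [Ring H] [Algebra 𝒜 H]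

/-- The defining multiplication rule of the Iwahori–Hecke algebra on its standard
basis `Tb`, with respect to the weight function `L`:
`T_s T_w = T_{sw}` if `ℓ(sw) > ℓ(w)` and
`T_s T_w = T_{sw} + (v^{L(s)} - v^{-L(s)}) T_w` if `ℓ(sw) < ℓ(w)`. -/
def HeckeMul (cs : CoxeterSystem M W) (Tb : Module.Basis W 𝒜 H) (L : W → ℕ) : Prop :=
  ∀ (i : B₀) (w : W),
    (cs.length (cs.simple i * w) > cs.length w →
      Tb (cs.simple i) * Tb w = Tb (cs.simple i * w)) ∧
    (cs.length (cs.simple i * w) < cs.length w →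
      Tb (cs.simple i) * Tb w = Tb (cs.simple i * w) +
        ((LaurentPolynomial.T (L (cs.simple i) : ℤ)
          - LaurentPolynomial.T (-(L (cs.simple i) : ℤ)) : 𝒜)) • Tb w)

/-- `bar` is the bar involution of the Hecke algebra: it is additive, multiplicative,
semilinear over `v ↦ v⁻¹` and sends `T_w` to `T_{w⁻¹}⁻¹`. -/
def IsBar (Tb : Module.Basis W 𝒜 H) (bar : H → H) : Prop :=
  (∀ x y, bar (x + y) = bar x + bar y) ∧
  (∀ x y, bar (x * y) = bar x * bar y) ∧
  (∀ (a : 𝒜) (x : H), bar (a • x) = (LaurentPolynomial.invert a) • bar x) ∧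
  (∀ w : W, bar (Tb w) * Tb w⁻¹ = 1 ∧ Tb w⁻¹ * bar (Tb w) = 1)

/-- `Cb` is the Kazhdan–Lusztig basis with KL polynomials `P`:
`C_w = T_w + Σ_y P_{y,w} T_y` with `P_{y,w} ∈ v⁻¹ℤ[v⁻¹]`, and each `C_w` is fixed by
the bar involution. -/
def IsKL (Tb Cb : Module.Basis W 𝒜 H) (P : W → W → 𝒜) (bar : H → H) : Prop :=
  (∀ w, (Function.support fun y => P y w).Finite) ∧
  (∀ w, Cb w = Tb w + ∑ᶠ y, P y w • Tb y) ∧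
  (∀ y w, Alt0 (P y w)) ∧
  (∀ w, bar (Cb w) = Cb w)

/-- The structure constants `h_{x,y,z}` of the Kazhdan–Lusztig basis:
`C_x C_y = Σ_z h_{x,y,z} C_z`. -/
def klh (Cb : Module.Basis W 𝒜 H) (x y z : W) : 𝒜 := Cb.repr (Cb x * Cb y) z

/-- The Kazhdan–Lusztig left preorder `x ≤_L y`. -/
def leftLe (cs : CoxeterSystem M W) (Cb : Module.Basis W 𝒜 H) (x y : W) : Prop :=
  Relation.ReflTransGen (fun b a => ∃ i : B₀, klh Cb (cs.simple i) b a ≠ 0) y x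

/-- The Kazhdan–Lusztig right preorder `x ≤_R y`. -/
def rightLe (cs : CoxeterSystem M W) (Cb : Module.Basis W 𝒜 H) (x y : W) : Prop :=
  Relation.ReflTransGen (fun b a => ∃ i : B₀, klh Cb b (cs.simple i) a ≠ 0) y x

/-- The Kazhdan–Lusztig two-sided preorder `x ≤_LR y`. -/
def lrLe (cs : CoxeterSystem M W) (Cb : Module.Basis W 𝒜 H) (x y : W) : Prop :=
  Relation.ReflTransGen (fun b a =>
    (∃ i : B₀, klh Cb (cs.simple i) b a ≠ 0) ∨ (∃ i : B₀, klh Cb b (cs.simple i) a ≠ 0)) y x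

/-- `flat` is the `𝒜`-linear anti-automorphism `♭` with `T_w ↦ T_{w⁻¹}`. -/
def IsFlat (Tb : Module.Basis W 𝒜 H) (flat : H →ₗ[𝒜] H) : Prop :=
  (∀ x y, flat (x * y) = flat y * flat x) ∧ (∀ w, flat (Tb w) = Tb w⁻¹)

/-- The Bruhat order (strict) on a Coxeter group: the transitive closure of
`u < tu` for reflections `t` with `ℓ(u) < ℓ(tu)`. -/
def bruhatLt (cs : CoxeterSystem M W) (x y : W) : Prop :=
  Relation.TransGen
    (fun a b => cs.length a < cs.length b ∧ ∃ t, cs.IsReflection t ∧ b = t * a) x y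

section Aux

variable {cs : CoxeterSystem M W} {L : W → ℕ} {Tb : Module.Basis W 𝒜 H} {bar : H → H}

lemma aux_wone (cs : CoxeterSystem M W) (h : IsEmpty B₀) (w : W) : w = 1 := by
  obtain ⟨ω, -, rfl⟩ := cs.exists_reduced_word w
  · cases ω with
    | nil => exact cs.wordProd_nil
    | cons a _ => exact (h.false a).elim

lemma aux_Tone (hmul : HeckeMul cs Tb L) (hbar : IsBar Tb bar) (i : B₀) :
    Tb 1 = (1 : H) := by
  have h1 : Tb (cs.simple i) * Tb 1 = Tb (cs.simple i) := by
    have := (hmul i 1).1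
    rw [mul_one] at this
    exact this (by simp [cs.length_simple, cs.length_one])
  have hb := (hbar.2.2.2 (cs.simple i)).1
  rw [cs.inv_simple] at hb
  calc Tb 1 = (bar (Tb (cs.simple i)) * Tb (cs.simple i)) * Tb 1 := by rw [hb, one_mul]
  _ = bar (Tb (cs.simple i)) * (Tb (cs.simple i) * Tb 1) := by rw [mul_assoc]
  _ = 1 := by rw [h1, hb]

lemma aux_decomp (hmul : HeckeMul cs Tb L) {x : W} (hx : x ≠ 1) :
    ∃ (i : B₀) (x' : W), cs.length x' + 1 = cs.length x ∧ x = cs.simple i * x' ∧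
      Tb x = Tb (cs.simple i) * Tb x' := by
  obtain ⟨i, hi⟩ := cs.exists_leftDescent_of_ne_one hx
  rw [cs.isLeftDescent_iff] at hi
  refine ⟨i, cs.simple i * x, hi, ?_, ?_⟩
  · rw [← mul_assoc, cs.simple_mul_simple_self, one_mul]
  · have h2 : cs.simple i * (cs.simple i * x) = x := by
      rw [← mul_assoc, cs.simple_mul_simple_self, one_mul]
    have := (hmul i (cs.simple i * x)).1 (by rw [h2]; omega)
    rw [h2] at this
    exact this.symm


lemma aux_mulS (hmul : HeckeMul cs Tb L) (i : B₀) {h : H} {Q : W → Prop}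
    (hh : h ∈ Submodule.span 𝒜 (Tb '' {w | Q w})) :
    Tb (cs.simple i) * h ∈ Submodule.span 𝒜
      (Tb '' {z | ∃ w, Q w ∧ cs.length z ≤ cs.length w + 1}) := by
  induction hh using Submodule.span_induction with
  | mem x hx =>
    obtain ⟨w, hw, rfl⟩ := hx
    rcases Nat.lt_or_ge (cs.length w) (cs.length (cs.simple i * w)) with hlt | hge
    · rw [(hmul i w).1 hlt]
      refine Submodule.subset_span ⟨cs.simple i * w, ⟨w, hw, ?_⟩, rfl⟩
      rcases cs.length_simple_mul w i with h1 | h1 <;> omega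
    · have hne := cs.length_simple_mul_ne w i
      have hlt : cs.length (cs.simple i * w) < cs.length w := by omega
      rw [(hmul i w).2 hlt]
      refine Submodule.add_mem _ ?_ (Submodule.smul_mem _ _ ?_)
      · exact Submodule.subset_span ⟨cs.simple i * w, ⟨w, hw, by omega⟩, rfl⟩
      · exact Submodule.subset_span ⟨w, ⟨w, hw, by omega⟩, rfl⟩
  | zero => rw [mul_zero]; exact Submodule.zero_mem _
  | add x y _ _ hx hy => rw [mul_add]; exact Submodule.add_mem _ hx hy
  | smul a x _ hx => rw [mul_smul_comm]; exact Submodule.smul_mem _ _ hx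

lemma aux_Tsupp (hmul : HeckeMul cs Tb L) (hbar : IsBar Tb bar) (x y : W) :
    Tb x * Tb y ∈ Submodule.span 𝒜
      (Tb '' {z | cs.length z ≤ cs.length x + cs.length y}) := by
  generalize hn : cs.length x = n
  induction n using Nat.strong_induction_on generalizing x with
  | _ n ih =>
    rcases eq_or_ne x 1 with rfl | hx
    · rcases isEmpty_or_nonempty B₀ with hB | ⟨⟨i⟩⟩
      · have : {z : W | cs.length z ≤ n + cs.length y} = Set.univ := by
          ext z
          have := aux_wone cs hB z
          subst this
          simp [cs.length_one]
        rw [this, Set.image_univ, Tb.span_eq]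
        trivial
      · rw [aux_Tone hmul hbar i, one_mul]
        exact Submodule.subset_span ⟨y, by simp, rfl⟩
    · obtain ⟨i, x', hlen, rfl, hT⟩ := aux_decomp hmul hx
      rw [hT, mul_assoc]
      have hx' := ih (cs.length x') (by omega) x' rfl
      refine Submodule.span_le.mpr ?_ (aux_mulS hmul i hx')
      rintro - ⟨z, ⟨w, hw, hz⟩, rfl⟩
      exact Submodule.subset_span ⟨z, by simp only [Set.mem_setOf_eq] at hw ⊢; omega, rfl⟩


lemma aux_Tadd [Nonempty B₀] (hmul : HeckeMul cs Tb L) (hbar : IsBar Tb bar) (x y : W)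
    (hxy : cs.length (x * y) = cs.length x + cs.length y) :
    Tb x * Tb y = Tb (x * y) := by
  generalize hn : cs.length x = n
  induction n using Nat.strong_induction_on generalizing x with
  | _ n ih =>
    rcases eq_or_ne x 1 with rfl | hx
    · rw [aux_Tone hmul hbar (Classical.arbitrary B₀), one_mul, one_mul]
    · obtain ⟨i, x', hlen, rfl, hT⟩ := aux_decomp hmul hx
      have h1 : cs.length (x' * y) = cs.length x' + cs.length y := by
        have h2 := cs.length_mul_le x' y
        have h3 := cs.length_mul_le (cs.simple i) (x' * y)
        rw [mul_assoc] at hxy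
        rw [cs.length_simple] at h3
        omega
      have h4 : cs.length (cs.simple i * (x' * y)) > cs.length (x' * y) := by
        rw [← mul_assoc]; omega
      rw [hT, mul_assoc, ih (cs.length x') (by omega) x' h1 rfl,
        (hmul i (x' * y)).1 h4, mul_assoc]

lemma aux_barT [Nonempty B₀] (hmul : HeckeMul cs Tb L) (hbar : IsBar Tb bar) (y : W) :
    bar (Tb y) - Tb y ∈ Submodule.span 𝒜 (Tb '' {z | cs.length z < cs.length y}) := by
  generalize hn : cs.length y = n
  induction n using Nat.strong_induction_on generalizing y with
  | _ n ih =>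
    rcases eq_or_ne y 1 with rfl | hy
    · have h1 : Tb (1:W) = (1:H) := aux_Tone hmul hbar (Classical.arbitrary B₀)
      have h2 := (hbar.2.2.2 (1:W)).1
      rw [inv_one, h1, mul_one] at h2
      rw [h1, h2, sub_self]
      exact Submodule.zero_mem _
    · obtain ⟨i, y', hlen, rfl, hT⟩ := aux_decomp hmul hy
      set s := cs.simple i with hs
      set ξ : 𝒜 := LaurentPolynomial.T (L s : ℤ) - LaurentPolynomial.T (-(L s : ℤ)) with hξ
      -- bar (Tb s) = Tb s - ξ • 1
      have hss : cs.length (s * s) < cs.length s := by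
        rw [cs.simple_mul_simple_self, cs.length_one, cs.length_simple]; omega
      have hTs2 : Tb s * Tb s = 1 + ξ • Tb s := by
        have := (hmul i s).2 hss
        rw [cs.simple_mul_simple_self, aux_Tone hmul hbar i] at this
        exact this
      have hinv : Tb s * (Tb s - ξ • (1:H)) = 1 := by
        rw [mul_sub, hTs2, mul_smul_comm, mul_one]; abel
      have hbs : bar (Tb s) * Tb s = 1 := by
        have := (hbar.2.2.2 s).1; rwa [hs, cs.inv_simple, ← hs] at this
      have hbars : bar (Tb s) = Tb s - ξ • (1:H) := by
        calc bar (Tb s) = bar (Tb s) * (Tb s * (Tb s - ξ • (1:H))) := by rw [hinv, mul_one]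
        _ = (bar (Tb s) * Tb s) * (Tb s - ξ • (1:H)) := by rw [mul_assoc]
        _ = Tb s - ξ • (1:H) := by rw [hbs, one_mul]
      -- inductive step
      have hr := ih (cs.length y') (by omega) y' rfl
      set r := bar (Tb y') - Tb y' with hrdef
      have hbary : bar (Tb (s * y')) = Tb (s * y') + (Tb s * r - ξ • bar (Tb y')) := by
        rw [hT, hbar.2.1, hbars, sub_mul, hrdef]
        rw [mul_sub, smul_mul_assoc, one_mul]
        rw [← hT]
        abel
      rw [hbary]
      have hm1 : Tb s * r ∈ Submodule.span 𝒜 (Tb '' {z | cs.length z < cs.length (s * y')}) := by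
        refine Submodule.span_le.mpr ?_ (aux_mulS hmul i hr)
        rintro - ⟨z, ⟨w, hw, hz⟩, rfl⟩
        refine Submodule.subset_span ⟨z, ?_, rfl⟩
        simp only [Set.mem_setOf_eq] at hw ⊢
        omega
      have hm2 : bar (Tb y') ∈ Submodule.span 𝒜 (Tb '' {z | cs.length z < cs.length (s * y')}) := by
        have h5 : bar (Tb y') = Tb y' + r := by rw [hrdef]; abel
        rw [h5]
        refine Submodule.add_mem _ (Submodule.subset_span ⟨y', by simp only [Set.mem_setOf_eq]; omega, rfl⟩) ?_
        refine Submodule.span_mono ?_ hr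
        refine Set.image_mono ?_
        intro z hz
        simp only [Set.mem_setOf_eq] at hz ⊢
        omega
      have : Tb (s * y') + (Tb s * r - ξ • bar (Tb y')) - Tb (s * y')
          = Tb s * r - ξ • bar (Tb y') := by abel
      rw [this, ← hn]
      exact Submodule.sub_mem _ hm1 (Submodule.smul_mem _ _ hm2)


-- Alt0 facts
lemma aux_alt_zero {f : 𝒜} (hf : Alt0 f) : f.coeff 0 = 0 := by
  by_contra h
  exact absurd ((hf 0 h).1) (lt_irrefl 0)

lemma aux_one_coeff_zero : (1 : 𝒜).coeff 0 = 1 := by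
  rw [AddMonoidAlgebra.one_def]
  exact Finsupp.single_eq_same

lemma aux_one_add_ne {f : 𝒜} (hf : Alt0 f) : (1 : 𝒜) + f ≠ 0 := by
  intro h
  have h0 : ((1 : 𝒜) + f).coeff 0 = 0 := by rw [h]; rfl
  have h1 : ((1 : 𝒜) + f).coeff 0 = (1 : 𝒜).coeff 0 + f.coeff 0 := rfl
  rw [h1, aux_alt_zero hf, aux_one_coeff_zero] at h0
  simp at h0

lemma aux_alt_invert {f : 𝒜} (hf : Alt0 f) (h : LaurentPolynomial.invert f = f) :
    f = 0 := by
  by_contra h0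
  obtain ⟨n, hn⟩ : ∃ n, f.coeff n ≠ 0 := by
    by_contra hc
    push_neg at hc
    exact h0 (LaurentPolynomial.ext (fun a => by simpa using hc a))
  have hneg : n < 0 := (hf n hn).1
  have h2 : f.coeff (-n) ≠ 0 := by
    have := congrArg (fun g : 𝒜 => g.coeff (-n)) h
    rw [LaurentPolynomial.invert_apply, neg_neg] at this
    rwa [this] at hn
  have := (hf (-n) h2).1
  omega

variable {Cb : Module.Basis W 𝒜 H} {P : W → W → 𝒜}

lemma aux_reprC (hKL : IsKL Tb Cb P bar) (u z : W) :
    Tb.repr (Cb u) z = Finsupp.single u (1:𝒜) z + P z u := by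
  have hsupp : (Function.support fun y => P y u • Tb y).Finite :=
    (hKL.1 u).subset (fun y hy => by
      simp only [Function.mem_support] at hy ⊢
      intro h
      rw [h, zero_smul] at hy
      exact hy rfl)
  set φ : H →+ 𝒜 := ((Finsupp.applyAddHom z).comp
    ((Tb.repr : H ≃ₗ[𝒜] (W →₀ 𝒜)) : H →ₗ[𝒜] (W →₀ 𝒜)).toAddMonoidHom) with hφdef
  have hφ : ∀ h : H, φ h = Tb.repr h z := fun h => rfl
  classical
  rw [← hφ, hKL.2.1 u, map_add, hφ, Tb.repr_self]
  congr 1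
  rw [φ.map_finsum hsupp]
  have hterm : ∀ y, φ (P y u • Tb y) = if y = z then P y u else 0 := by
    intro y
    rw [hφ, map_smul, Finsupp.smul_apply, Tb.repr_self, Finsupp.single_apply]
    simp [smul_eq_mul, mul_ite]
  rw [finsum_congr hterm, finsum_eq_single _ z (fun b hb => by simp [hb]), if_pos rfl]


lemma aux_reprSpan0 {Q : W → Prop} {h : H}
    (hh : h ∈ Submodule.span 𝒜 (Tb '' {w | Q w})) {z : W} (hz : ¬ Q z) :
    Tb.repr h z = 0 := by
  by_contra hc
  exact hz (Tb.repr_support_subset_of_mem_span _ hh (Finsupp.mem_support_iff.mpr hc))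

lemma aux_Psupp [Nonempty B₀] (hmul : HeckeMul cs Tb L) (hbar : IsBar Tb bar)
    (hKL : IsKL Tb Cb P bar) (u y : W) (hP : P y u ≠ 0) (hyu : y ≠ u) :
    cs.length y < cs.length u := by
  classical
  set c : W →₀ 𝒜 := Tb.repr (Cb u) with hc
  have hcz : ∀ z, z ≠ u → c z = P z u := by
    intro z hz
    rw [hc, aux_reprC hKL, Finsupp.single_eq_of_ne hz, zero_add]
  have hcu : c u = 1 + P u u := by
    rw [hc, aux_reprC hKL, Finsupp.single_eq_same]
  have hune : c u ≠ 0 := by rw [hcu]; exact aux_one_add_ne (hKL.2.2.1 u u)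
  have hmax : ∀ z₀ ∈ c.support, (∀ z ∈ c.support, cs.length z ≤ cs.length z₀) → z₀ = u := by
    intro z₀ hz₀ hm
    by_contra hne
    set barH : H →+ H := AddMonoidHom.mk' bar hbar.1 with hbarH
    have hsum : Cb u = ∑ z ∈ c.support, c z • Tb z := by
      conv_lhs => rw [← Tb.linearCombination_repr (Cb u)]
      rw [Finsupp.linearCombination_apply, Finsupp.sum]
    have hbarsum : bar (Cb u) = ∑ z ∈ c.support, LaurentPolynomial.invert (c z) • bar (Tb z) := by
      have h1 : bar (Cb u) = barH (∑ z ∈ c.support, c z • Tb z) := by rw [← hsum]; rfl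
      rw [h1, map_sum]
      exact Finset.sum_congr rfl (fun z _ => hbar.2.2.1 (c z) (Tb z))
    have hrepr : Tb.repr (bar (Cb u)) z₀
        = ∑ z ∈ c.support, LaurentPolynomial.invert (c z) * Tb.repr (bar (Tb z)) z₀ := by
      rw [hbarsum, map_sum, Finsupp.finset_sum_apply]
      exact Finset.sum_congr rfl (fun z _ => by rw [map_smul, Finsupp.smul_apply, smul_eq_mul])
    have hterm : ∀ z ∈ c.support, Tb.repr (bar (Tb z)) z₀ = Finsupp.single z (1:𝒜) z₀ := by
      intro z hz
      have h2 : bar (Tb z) = Tb z + (bar (Tb z) - Tb z) := by abel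
      have h3 : Tb.repr (bar (Tb z) - Tb z) z₀ = 0 := by
        refine aux_reprSpan0 (aux_barT hmul hbar z) ?_
        simp only [Set.mem_setOf_eq, not_lt]
        exact hm z hz
      rw [h2, map_add, Finsupp.add_apply, h3, add_zero, Tb.repr_self]
    have hval : Tb.repr (bar (Cb u)) z₀ = LaurentPolynomial.invert (c z₀) := by
      rw [hrepr, Finset.sum_eq_single_of_mem z₀ hz₀
        (fun z hz hne2 => by simp [hterm z hz, Finsupp.single_eq_of_ne hne2.symm]),
        hterm z₀ hz₀, Finsupp.single_eq_same, mul_one]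
    rw [hKL.2.2.2 u] at hval
    have hfix : LaurentPolynomial.invert (c z₀) = c z₀ := by rw [← hval]
    have : c z₀ = 0 := by
      rw [hcz z₀ hne] at hfix ⊢
      exact aux_alt_invert (hKL.2.2.1 z₀ u) hfix
    exact (Finsupp.mem_support_iff.mp hz₀) this
  have hy : y ∈ c.support := by
    rw [Finsupp.mem_support_iff, hcz y hyu]
    exact hP
  obtain ⟨z₀, hz₀, hmz₀⟩ := c.support.exists_max_image cs.length ⟨y, hy⟩
  have hz₀u : z₀ = u := hmax z₀ hz₀ hmz₀
  have hle : cs.length y ≤ cs.length u := hz₀u ▸ hmz₀ y hy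
  rcases lt_or_eq_of_le hle with h | h
  · exact h
  · exfalso
    exact hyu (hmax y hy (fun z hz => h ▸ (hz₀u ▸ hmz₀ z hz)))

lemma aux_lead [Nonempty B₀] (hmul : HeckeMul cs Tb L) (hbar : IsBar Tb bar)
    (hKL : IsKL Tb Cb P bar) (u x : W)
    (hxu : cs.length (x * u) = cs.length x + cs.length u) :
    Tb x * Cb u - ((1:𝒜) + P u u) • Tb (x * u) ∈
      Submodule.span 𝒜 (Tb '' {z | cs.length z < cs.length (x * u)}) := by
  classical
  set c : W →₀ 𝒜 := Tb.repr (Cb u) with hc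
  have hcu : c u = 1 + P u u := by
    rw [hc, aux_reprC hKL, Finsupp.single_eq_same]
  have hune : c u ≠ 0 := by rw [hcu]; exact aux_one_add_ne (hKL.2.2.1 u u)
  have hu : u ∈ c.support := Finsupp.mem_support_iff.mpr hune
  have hsum : Cb u = ∑ z ∈ c.support, c z • Tb z := by
    conv_lhs => rw [← Tb.linearCombination_repr (Cb u)]
    rw [Finsupp.linearCombination_apply, Finsupp.sum]
  have hmulsum : Tb x * Cb u = ∑ z ∈ c.support, c z • (Tb x * Tb z) := by
    rw [hsum, Finset.mul_sum]
    exact Finset.sum_congr rfl (fun z _ => mul_smul_comm _ _ _)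
  have hsplit : Tb x * Cb u
      = ((1:𝒜) + P u u) • Tb (x * u) + ∑ z ∈ c.support.erase u, c z • (Tb x * Tb z) := by
    rw [hmulsum, ← Finset.add_sum_erase _ _ hu, hcu, aux_Tadd hmul hbar x u hxu]
  rw [hsplit]
  have : ((1:𝒜) + P u u) • Tb (x * u) + (∑ z ∈ c.support.erase u, c z • (Tb x * Tb z))
      - ((1:𝒜) + P u u) • Tb (x * u) = ∑ z ∈ c.support.erase u, c z • (Tb x * Tb z) := by abel
  rw [this]
  refine Submodule.sum_mem _ (fun z hz => Submodule.smul_mem _ _ ?_)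
  have hzu : z ≠ u := Finset.ne_of_mem_erase hz
  have hzsupp : c z ≠ 0 := Finsupp.mem_support_iff.mp (Finset.mem_of_mem_erase hz)
  have hPz : P z u ≠ 0 := by
    rwa [hc, aux_reprC hKL, Finsupp.single_eq_of_ne hzu, zero_add] at hzsupp
  have hlz : cs.length z < cs.length u := aux_Psupp hmul hbar hKL u z hPz hzu
  refine Submodule.span_le.mpr ?_ (aux_Tsupp hmul hbar x z)
  rintro - ⟨w, hw, rfl⟩
  refine Submodule.subset_span ⟨w, ?_, rfl⟩
  simp only [Set.mem_setOf_eq] at hw ⊢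
  omega

end Aux

/-- under conditions I1–I4, the set `{T_x C_u | u ∈ U, x ∈ X_u}` is an
`𝒜`-basis of the left ideal `M = ⟨T_x C_u | u ∈ U, x ∈ X_u⟩_𝒜`. -/
theorem stmt11 (cs : CoxeterSystem M W) (L : W → ℕ) (Tb Cb : Module.Basis W 𝒜 H)
    (P : W → W → 𝒜) (bar : H → H)
    (hw : IsWeight cs L) (hmul : HeckeMul cs Tb L)
    (hbar : IsBar Tb bar) (hKL : IsKL Tb Cb P bar)
    (U : Set W) (X : W → Set W)
    (hI1 : ∀ u ∈ U, (1 : W) ∈ X u)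
    (hI2 : ∀ u ∈ U, ∀ x ∈ X u, cs.length (x * u) = cs.length x + cs.length u)
    (hI3 : ∀ u ∈ U, ∀ v ∈ U, u ≠ v → ∀ x ∈ X u, ∀ y ∈ X v, x * u ≠ y * v) :
    ∀ Mid : Submodule 𝒜 H,
      Mid = Submodule.span 𝒜 {z : H | ∃ u ∈ U, ∃ x ∈ X u, z = Tb x * Cb u} →
      (∀ z ∈ Mid, ∀ a : H, a * z ∈ Mid) →  -- I4
      ∃ b : Module.Basis {p : W × W // p.2 ∈ U ∧ p.1 ∈ X p.2} 𝒜 ↥Mid,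
        ∀ p, (b p : H) = Tb p.1.1 * Cb p.1.2 := by
  intro Mid hMid _hI4
  subst hMid
  classical
  set f : {p : W × W // p.2 ∈ U ∧ p.1 ∈ X p.2} → H := fun p => Tb p.1.1 * Cb p.1.2 with hf
  have hset : {z : H | ∃ u ∈ U, ∃ x ∈ X u, z = Tb x * Cb u} = Set.range f := by
    ext z
    constructor
    · rintro ⟨u, hu, x, hx, rfl⟩
      exact ⟨⟨(x, u), hu, hx⟩, rfl⟩
    · rintro ⟨⟨⟨x, u⟩, hu, hx⟩, rfl⟩
      exact ⟨u, hu, x, hx, rfl⟩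
  have ginj : ∀ p q : {p : W × W // p.2 ∈ U ∧ p.1 ∈ X p.2},
      p.1.1 * p.1.2 = q.1.1 * q.1.2 → p = q := by
    rintro ⟨⟨x, u⟩, hu, hx⟩ ⟨⟨y, v⟩, hv, hy⟩ h
    by_cases huv : u = v
    · subst huv
      have : x = y := mul_right_cancel h
      subst this; rfl
    · exact absurd h (hI3 u hu v hv huv x hx y hy)
  have li : LinearIndependent 𝒜 f := by
    rw [linearIndependent_iff]
    intro l hl
    by_contra hlne
    have hsupp : l.support.Nonempty := Finsupp.support_nonempty_iff.mpr hlne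
    have hl' : ∑ p ∈ l.support, l p • f p = 0 := by
      rwa [Finsupp.linearCombination_apply, Finsupp.sum] at hl
    rcases isEmpty_or_nonempty B₀ with hB | hB
    · -- degenerate case: W is a subsingleton
      have hW : Subsingleton W :=
        ⟨fun a b => (aux_wone cs hB a).trans (aux_wone cs hB b).symm⟩
      obtain ⟨p₀, hp₀⟩ := hsupp
      have hone : ∑ p ∈ l.support, l p • f p = l p₀ • f p₀ :=
        Finset.sum_eq_single_of_mem p₀ hp₀
          (fun p _ hne => absurd (Subsingleton.elim p p₀) hne)
      rw [hone] at hl'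
      obtain ⟨⟨x, u⟩, hu, hx⟩ := p₀
      have hinv := hbar.2.2.2 x⁻¹
      rw [inv_inv] at hinv
      have h1 : l ⟨(x, u), hu, hx⟩ • (Tb x * Cb u) = 0 := hl'
      have h2 : l ⟨(x, u), hu, hx⟩ • Cb u = 0 := by
        calc l ⟨(x, u), hu, hx⟩ • Cb u
            = l ⟨(x, u), hu, hx⟩ • ((bar (Tb x⁻¹) * Tb x) * Cb u) := by
              rw [hinv.1, one_mul]
        _ = l ⟨(x, u), hu, hx⟩ • (bar (Tb x⁻¹) * (Tb x * Cb u)) := by rw [mul_assoc]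
        _ = bar (Tb x⁻¹) * (l ⟨(x, u), hu, hx⟩ • (Tb x * Cb u)) := (mul_smul_comm _ _ _).symm
        _ = 0 := by rw [h1, mul_zero]
      have h3 : l ⟨(x, u), hu, hx⟩ * Tb.repr (Cb u) u = 0 := by
        have := congrArg (fun h => Tb.repr h u) h2
        simpa [map_smul, Finsupp.smul_apply] using this
      have h4 : Tb.repr (Cb u) u ≠ 0 := by
        rw [aux_reprC hKL, Finsupp.single_eq_same]
        exact aux_one_add_ne (hKL.2.2.1 u u)
      rcases mul_eq_zero.mp h3 with h | h
      · exact Finsupp.mem_support_iff.mp hp₀ h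
      · exact h4 h
    · -- main case
      obtain ⟨p₀, hp₀, hmax⟩ :=
        l.support.exists_max_image (fun p => cs.length (p.1.1 * p.1.2)) hsupp
      set z₀ := p₀.1.1 * p₀.1.2 with hz₀
      have heval : ∑ p ∈ l.support, l p * Tb.repr (f p) z₀ = 0 := by
        have := congrArg (fun h => Tb.repr h z₀) hl'
        simpa [map_sum, Finsupp.finset_sum_apply, map_smul, Finsupp.smul_apply] using this
      have hreprf : ∀ p ∈ l.support,
          Tb.repr (f p) z₀
            = ((1:𝒜) + P p.1.2 p.1.2) * Finsupp.single (p.1.1 * p.1.2) (1:𝒜) z₀ := by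
        intro p hp
        have hxu := hI2 p.1.2 p.2.1 p.1.1 p.2.2
        have hr := aux_lead hmul hbar hKL p.1.2 p.1.1 hxu
        have hdec : f p = ((1:𝒜) + P p.1.2 p.1.2) • Tb (p.1.1 * p.1.2)
            + (f p - ((1:𝒜) + P p.1.2 p.1.2) • Tb (p.1.1 * p.1.2)) := by abel
        have h0 : Tb.repr (f p - ((1:𝒜) + P p.1.2 p.1.2) • Tb (p.1.1 * p.1.2)) z₀ = 0 := by
          refine aux_reprSpan0 hr ?_
          simp only [Set.mem_setOf_eq, not_lt]
          exact hmax p hp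
        conv_lhs => rw [hdec]
        rw [map_add, Finsupp.add_apply, h0, add_zero, map_smul, Finsupp.smul_apply,
          Tb.repr_self, smul_eq_mul]
      have hsum2 : ∑ p ∈ l.support, l p * Tb.repr (f p) z₀
          = l p₀ * ((1:𝒜) + P p₀.1.2 p₀.1.2) := by
        rw [Finset.sum_eq_single_of_mem p₀ hp₀ (fun p hp hne => by
          rw [hreprf p hp, Finsupp.single_eq_of_ne (fun hc => hne (ginj p p₀ hc.symm)), mul_zero,
            mul_zero])]
        rw [hreprf p₀ hp₀, Finsupp.single_eq_same, mul_one]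
      rw [hsum2] at heval
      rcases mul_eq_zero.mp heval with h | h
      · exact Finsupp.mem_support_iff.mp hp₀ h
      · exact aux_one_add_ne (hKL.2.2.1 p₀.1.2 p₀.1.2) h
  have hspan : Submodule.span 𝒜 {z : H | ∃ u ∈ U, ∃ x ∈ X u, z = Tb x * Cb u}
      = Submodule.span 𝒜 (Set.range f) := by rw [hset]
  refine ⟨(Module.Basis.span li).map (LinearEquiv.ofEq _ _ hspan.symm), fun p => ?_⟩
  rw [Module.Basis.map_apply]
  have h5 : ((LinearEquiv.ofEq _ _ hspan.symm) (Module.Basis.span li p) : H)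
      = ((Module.Basis.span li p : Submodule.span 𝒜 (Set.range f)) : H) := rfl
  rw [h5, Module.Basis.span_apply]
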